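/- arXiv:1711.10983 — 2 statements merged into one kernel-verified Lean document; each statement's English description precedes it below -/
import Mathlib

section
/- Let f be a discrete Morse-Bott function on a finite abstract simplicial complex K and suppose I = C^red = {σ} is a one-element reduced collection, with dim σ = k. Let N be the closure of I and E = {ν ∈ N ∖ I : f(ν) ≤ f(σ)} its exit set. Then E = N ∖ {σ}, and the relative mod-2 homology satisfies dim H_i(N, E; ℤ/2) = 1 if i = k and 0 otherwise; equivalently the homological Conley index of I is C_t(I) = t^k. -/
open Finset

noncomputable section
open scoped Classical

/-- `σ` is a facet of `τ`: `σ ⊆ τ` and `dim σ = dim τ − 1`. -/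
def Facet (σ τ : Finset ℕ) : Prop := σ ⊆ τ ∧ σ.card + 1 = τ.card

/-- A finite abstract simplicial complex: a finite family of nonempty finite sets
closed under taking nonempty subsets. -/
def IsComplex (K : Finset (Finset ℕ)) : Prop :=
  (∀ σ ∈ K, σ.Nonempty) ∧ ∀ σ ∈ K, ∀ ν, ν ⊆ σ → ν.Nonempty → ν ∈ K

/-- The closure of a set of cells: all nonempty subsets of its cells. -/
def closureOf (S : Finset (Finset ℕ)) : Finset (Finset ℕ) :=
  S.biUnion fun σ => σ.powerset.filter fun ν => ν ≠ ∅

/-- The graph on `C` joining two cells whenever their closures intersect is connected. -/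
def ConnectedOn (C : Finset (Finset ℕ)) : Prop :=
  ∀ a ∈ C, ∀ b ∈ C,
    Relation.ReflTransGen
      (fun x y => x ∈ C ∧ y ∈ C ∧ (closureOf {x} ∩ closureOf {y}).Nonempty) a b

/-- A nonempty set of cells of `K`, all with the same `f`-value, whose
closure-intersection graph is connected. -/
def IsPreCollection (K : Finset (Finset ℕ)) (f : Finset ℕ → ℝ) (C : Finset (Finset ℕ)) :
    Prop :=
  C ⊆ K ∧ C.Nonempty ∧ (∀ σ ∈ C, ∀ τ ∈ C, f σ = f τ) ∧ ConnectedOn C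

/-- A collection for `f`: a maximal constant-value connected set of cells. -/
def IsCollection (K : Finset (Finset ℕ)) (f : Finset ℕ → ℝ) (C : Finset (Finset ℕ)) :
    Prop :=
  IsPreCollection K f C ∧ ∀ C', IsPreCollection K f C' → C ⊆ C' → C' = C

/-- `#{τ ∉ C : σ < τ, f(τ) < f(σ)}`. -/
def UpCount (K : Finset (Finset ℕ)) (f : Finset ℕ → ℝ) (C : Finset (Finset ℕ))
    (σ : Finset ℕ) : ℕ :=
  (K.filter fun τ => τ ∉ C ∧ Facet σ τ ∧ f τ < f σ).card

/-- `#{ν ∉ C : ν < σ, f(ν) > f(σ)}`. -/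
def DownCount (K : Finset (Finset ℕ)) (f : Finset ℕ → ℝ) (C : Finset (Finset ℕ))
    (σ : Finset ℕ) : ℕ :=
  (K.filter fun ν => ν ∉ C ∧ Facet ν σ ∧ f σ < f ν).card

/-- A discrete Morse-Bott function on `K`. -/
def IsMorseBott (K : Finset (Finset ℕ)) (f : Finset ℕ → ℝ) : Prop :=
  ∀ C, IsCollection K f C → ∀ σ ∈ C, UpCount K f C σ ≤ 1 ∧ DownCount K f C σ ≤ 1

/-- `σ` is upward noncritical w.r.t. `C`. -/
def UpNoncrit (K : Finset (Finset ℕ)) (f : Finset ℕ → ℝ) (C : Finset (Finset ℕ))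
    (σ : Finset ℕ) : Prop :=
  ∃ w ∈ K, w ∉ C ∧ Facet σ w ∧ f w < f σ

/-- `σ` is downward noncritical w.r.t. `C`. -/
def DownNoncrit (K : Finset (Finset ℕ)) (f : Finset ℕ → ℝ) (C : Finset (Finset ℕ))
    (σ : Finset ℕ) : Prop :=
  ∃ w ∈ K, w ∉ C ∧ Facet w σ ∧ f σ < f w

/-- The reduced collection `C^red`: the cells of `C` that are neither upward nor
downward noncritical w.r.t. `C`. -/
def reducedOf (K : Finset (Finset ℕ)) (f : Finset ℕ → ℝ) (C : Finset (Finset ℕ)) :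
    Finset (Finset ℕ) :=
  C.filter fun σ => ¬ UpNoncrit K f C σ ∧ ¬ DownNoncrit K f C σ

/-- A noncritical pair: a two-element set `{σ, τ}` with `σ < τ` and `f σ ≥ f τ`. -/
def IsNoncritPair (f : Finset ℕ → ℝ) (S : Finset (Finset ℕ)) : Prop :=
  ∃ σ τ, Facet σ τ ∧ f τ ≤ f σ ∧ S = {σ, τ}

/-- A discrete Morse function in Forman's sense. -/
def IsDiscreteMorse (K : Finset (Finset ℕ)) (g : Finset ℕ → ℝ) : Prop :=
  ∀ σ ∈ K, (K.filter fun τ => Facet σ τ ∧ g τ ≤ g σ).card ≤ 1 ∧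
    (K.filter fun ν => Facet ν σ ∧ g σ ≤ g ν).card ≤ 1

/-- A critical cell of `g`. -/
def IsCritical (K : Finset (Finset ℕ)) (g : Finset ℕ → ℝ) (σ : Finset ℕ) : Prop :=
  σ ∈ K ∧ (K.filter fun τ => Facet σ τ ∧ g τ ≤ g σ).card = 0 ∧
    (K.filter fun ν => Facet ν σ ∧ g σ ≤ g ν).card = 0

/-- The `k`-dimensional cells of `S`. -/
def cells (S : Finset (Finset ℕ)) (k : ℕ) : Finset (Finset ℕ) :=
  S.filter fun σ => σ.card = k + 1

/-- The `ℤ/2`-vector space with basis the `k`-dimensional cells of `S`. -/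
abbrev Chain (S : Finset (Finset ℕ)) (k : ℕ) : Type :=
  ↥(cells S k) → ZMod 2

/-- The boundary operator `C_k(S) → C_j(S)` (used with `j = k − 1`), sending each
`k`-cell of `S` to the sum of those of its facets that lie in `S`. -/
def bdry (S : Finset (Finset ℕ)) (j k : ℕ) : Chain S k →ₗ[ZMod 2] Chain S j :=
  Matrix.mulVecLin (Matrix.of fun (ν : ↥(cells S j)) (τ : ↥(cells S k)) =>
    if Facet ν.1 τ.1 then (1 : ZMod 2) else 0)

/-- `b_k(S) = dim (ker ∂_k / im ∂_{k+1})`, the `k`-th mod-2 Betti number of the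
boundary complex of `S`. -/
def bettiOf (S : Finset (Finset ℕ)) (k : ℕ) : ℕ :=
  Module.finrank (ZMod 2)
    (↥(LinearMap.ker (bdry S (k - 1) k)) ⧸
      Submodule.comap (LinearMap.ker (bdry S (k - 1) k)).subtype
        (LinearMap.range (bdry S k (k + 1))))

/-- The Poincaré polynomial `P_t(S) = Σ_k b_k(S) t^k`. -/
def PtOf (S : Finset (Finset ℕ)) : Polynomial ℕ :=
  ∑ k ∈ Finset.range (S.sup Finset.card), Polynomial.C (bettiOf S k) * Polynomial.X ^ k

/-- `dim H_k(N, E; ℤ/2)`: the homology of the quotient chain complex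
`C_*(N)/C_*(E)`, computed via the relative chain complex with basis the cells of
`N \ E` (the image of the basis of `C_k(N)` in the quotient) and the induced
boundary. -/
def relBetti (N E : Finset (Finset ℕ)) (k : ℕ) : ℕ := bettiOf (N \ E) k

/-- The relative Poincaré polynomial `Σ_k dim H_k(N, E; ℤ/2) t^k`. -/
def relPt (N E : Finset (Finset ℕ)) : Polynomial ℕ := PtOf (N \ E)

/-- The Euler characteristic `Σ_k (−1)^k dim H_k(S; ℤ/2)`. -/
def eulerOf (S : Finset (Finset ℕ)) : ℤ :=
  ∑ k ∈ Finset.range (S.sup Finset.card), (-1 : ℤ) ^ k * bettiOf S k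

/-- The relative Euler characteristic `χ(N, E) = Σ_k (−1)^k dim H_k(N, E; ℤ/2)`. -/
def relEuler (N E : Finset (Finset ℕ)) : ℤ :=
  ∑ k ∈ Finset.range ((N \ E).sup Finset.card), (-1 : ℤ) ^ k * relBetti N E k

/-- Every cell of `K` lies in some collection. -/
lemma exists_collection_mem (K : Finset (Finset ℕ)) (f : Finset ℕ → ℝ)
    {ν : Finset ℕ} (hν : ν ∈ K) : ∃ C, IsCollection K f C ∧ ν ∈ C := by
  have hpre : IsPreCollection K f {ν} := by
    refine ⟨by simpa using hν, ⟨ν, Finset.mem_singleton_self ν⟩, ?_, ?_⟩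
    · intro a ha b hb
      rw [Finset.mem_singleton] at ha hb; subst ha; subst hb; rfl
    · intro a ha b hb
      rw [Finset.mem_singleton] at ha hb; subst ha; subst hb
      exact Relation.ReflTransGen.refl
  have hmem : ({ν} : Finset (Finset ℕ)) ∈ K.powerset.filter
      (fun D => IsPreCollection K f D ∧ ν ∈ D) := by
    rw [Finset.mem_filter, Finset.mem_powerset]
    exact ⟨Finset.singleton_subset_iff.mpr hν, hpre, Finset.mem_singleton_self ν⟩
  obtain ⟨B, hB, hmax⟩ := Finset.exists_max_image _ Finset.card ⟨_, hmem⟩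
  rw [Finset.mem_filter, Finset.mem_powerset] at hB
  refine ⟨B, ⟨hB.2.1, ?_⟩, hB.2.2⟩
  intro C' hC' hsub
  refine (Finset.eq_of_subset_of_card_le hsub ?_).symm
  exact hmax C' (by rw [Finset.mem_filter, Finset.mem_powerset]
                    exact ⟨hC'.1, hC', hsub hB.2.2⟩)

/-- Every face of a cell in the reduced collection has `f`-value at most that of the cell. -/
lemma face_le (K : Finset (Finset ℕ)) (hK : IsComplex K) (f : Finset ℕ → ℝ)
    (hf : IsMorseBott K f) (C : Finset (Finset ℕ)) (hC : IsCollection K f C)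
    (σ : Finset ℕ) (hσred : σ ∈ reducedOf K f C) :
    ∀ n ν, ν ⊆ σ → ν.Nonempty → σ.card ≤ ν.card + n → f ν ≤ f σ := by
  have hσC : σ ∈ C := Finset.mem_of_mem_filter σ hσred
  have hnd : ¬ DownNoncrit K f C σ := ((Finset.mem_filter.mp hσred).2).2
  have hσK : σ ∈ K := hC.1.1 hσC
  intro n
  induction n with
  | zero =>
      intro ν hsub hne hcard
      rw [Finset.eq_of_subset_of_card_le hsub (by simpa using hcard)]
  | succ n ih =>
      intro ν hsub hne hcard
      by_cases hle : σ.card ≤ ν.card + n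
      · exact ih ν hsub hne hle
      have hνK : ν ∈ K := hK.2 σ hσK ν hsub hne
      have hcard' : σ.card = ν.card + n + 1 := by omega
      cases n with
      | zero =>
          -- `ν` is a facet of `σ`
          by_cases hνC : ν ∈ C
          · exact (hC.1.2.2.1 ν hνC σ hσC).le
          · by_contra hgt
            push_neg at hgt
            exact hnd ⟨ν, hνK, hνC, ⟨hsub, by omega⟩, hgt⟩
      | succ m =>
          by_contra hgt
          push_neg at hgt
          have h2 : 1 < (σ \ ν).card := by
            rw [Finset.card_sdiff_of_subset hsub]; omega
          obtain ⟨x, hx, y, hy, hxy⟩ := Finset.one_lt_card.mp h2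
          rw [Finset.mem_sdiff] at hx hy
          set τ₁ := insert x ν with hτ₁def
          set τ₂ := insert y ν with hτ₂def
          have hsub₁ : τ₁ ⊆ σ := Finset.insert_subset hx.1 hsub
          have hsub₂ : τ₂ ⊆ σ := Finset.insert_subset hy.1 hsub
          have hc₁ : τ₁.card = ν.card + 1 := Finset.card_insert_of_notMem hx.2
          have hc₂ : τ₂.card = ν.card + 1 := Finset.card_insert_of_notMem hy.2
          have hle₁ : f τ₁ ≤ f σ :=
            ih τ₁ hsub₁ (Finset.insert_nonempty _ _) (by omega)
          have hle₂ : f τ₂ ≤ f σ :=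
            ih τ₂ hsub₂ (Finset.insert_nonempty _ _) (by omega)
          obtain ⟨C', hC', hνC'⟩ := exists_collection_mem K f hνK
          have hcount := (hf C' hC' ν hνC').1
          unfold UpCount at hcount
          have hnotC : ∀ τ, τ ⊆ σ → Facet ν τ → f τ ≤ f σ → τ ∈ K.filter
              (fun τ => τ ∉ C' ∧ Facet ν τ ∧ f τ < f ν) := by
            intro τ hτσ hfacet hfτ
            have hτK : τ ∈ K := hK.2 σ hσK τ hτσ ⟨ν.min' hne, hfacet.1 (ν.min'_mem hne)⟩
            have hlt : f τ < f ν := lt_of_le_of_lt hfτ hgt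
            refine Finset.mem_filter.mpr ⟨hτK, ?_, hfacet, hlt⟩
            intro hτC'
            exact absurd (hC'.1.2.2.1 ν hνC' τ hτC') (by linarith)
          have hm₁ := hnotC τ₁ hsub₁ ⟨Finset.subset_insert x ν, hc₁.symm⟩ hle₁
          have hm₂ := hnotC τ₂ hsub₂ ⟨Finset.subset_insert y ν, hc₂.symm⟩ hle₂
          have hne₁₂ : τ₁ ≠ τ₂ := by
            intro h
            have : x ∈ τ₂ := h ▸ Finset.mem_insert_self x ν
            rcases Finset.mem_insert.mp this with h' | h'
            · exact hxy h'
            · exact hx.2 h'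
          have hpair : ({τ₁, τ₂} : Finset (Finset ℕ)) ⊆ K.filter
              (fun τ => τ ∉ C' ∧ Facet ν τ ∧ f τ < f ν) := by
            intro τ hτ
            rcases Finset.mem_insert.mp hτ with h | h
            · exact h ▸ hm₁
            · exact (Finset.mem_singleton.mp h) ▸ hm₂
          have h2le : 2 ≤ (K.filter
              (fun τ => τ ∉ C' ∧ Facet ν τ ∧ f τ < f ν)).card := by
            calc 2 = ({τ₁, τ₂} : Finset (Finset ℕ)).card := by
                  rw [Finset.card_insert_of_notMem (by simpa using hne₁₂),
                    Finset.card_singleton]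
              _ ≤ _ := Finset.card_le_card hpair
          omega

/-- The boundary maps of the one-cell complex `{σ}` all vanish. -/
lemma bdry_singleton_eq_zero (σ : Finset ℕ) (j k : ℕ) :
    bdry {σ} j k = 0 := by
  unfold bdry
  have hM : (Matrix.of fun (ν : ↥(cells {σ} j)) (τ : ↥(cells {σ} k)) =>
      if Facet ν.1 τ.1 then (1 : ZMod 2) else 0) = 0 := by
    ext ν τ
    have hν : ν.1 = σ := Finset.mem_singleton.mp (Finset.mem_of_mem_filter _ ν.2)
    have hτ : τ.1 = σ := Finset.mem_singleton.mp (Finset.mem_of_mem_filter _ τ.2)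
    have hnf : ¬ Facet ν.1 τ.1 := by
      rw [hν, hτ]; rintro ⟨-, h⟩; omega
    simp [hnf]
  rw [hM, Matrix.mulVecLin_zero]

/-- If both boundary maps vanish, the homology is the whole chain group. -/
lemma finrank_quot_of_zero {F M N P : Type*} [Field F] [AddCommGroup M] [Module F M]
    [AddCommGroup N] [Module F N] [AddCommGroup P] [Module F P]
    (f : M →ₗ[F] N) (g : P →ₗ[F] M) (hf : f = 0) (hg : g = 0) :
    Module.finrank F
      (↥(LinearMap.ker f) ⧸
        Submodule.comap (LinearMap.ker f).subtype (LinearMap.range g)) =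
    Module.finrank F M := by
  subst hf; subst hg
  rw [LinearMap.range_zero, Submodule.comap_bot, Submodule.ker_subtype,
    (Submodule.quotEquivOfEqBot ⊥ rfl).finrank_eq, LinearMap.ker_zero, finrank_top]

/-- The Betti numbers of the one-cell complex `{σ}`. -/
lemma betti_singleton (σ : Finset ℕ) (k i : ℕ) (hk : σ.card = k + 1) :
    bettiOf {σ} i = if i = k then 1 else 0 := by
  unfold bettiOf
  rw [finrank_quot_of_zero _ _ (bdry_singleton_eq_zero σ (i - 1) i)
    (bdry_singleton_eq_zero σ i (i + 1))]
  rw [show (Module.finrank (ZMod 2) (Chain {σ} i)) = Fintype.card ↥(cells {σ} i) from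
    Module.finrank_fintype_fun_eq_card (ZMod 2), Fintype.card_coe]
  unfold cells
  by_cases h : i = k
  · subst h
    rw [if_pos rfl, Finset.filter_singleton, if_pos hk, Finset.card_singleton]
  · rw [if_neg h, Finset.filter_singleton, if_neg (by omega), Finset.card_empty]

/-- If `I = C^red = {σ}` is a one-element reduced collection with
`dim σ = k`, `N` is the closure of `I` and `E = {ν ∈ N ∖ I : f ν ≤ f σ}`, then
`E = N ∖ {σ}` and `dim H_i(N, E; ℤ/2) = 1` for `i = k` and `0` otherwise, i.e. the
homological Conley index of `I` is `C_t(I) = t^k`. -/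
theorem statement13 (K : Finset (Finset ℕ)) (hK : IsComplex K) (f : Finset ℕ → ℝ)
    (hf : IsMorseBott K f) (C : Finset (Finset ℕ)) (hC : IsCollection K f C)
    (σ : Finset ℕ) (k : ℕ) (hred : reducedOf K f C = {σ}) (hk : σ.card = k + 1) :
    let I := reducedOf K f C
    let N := closureOf I
    let E := N.filter fun ν => ν ∉ I ∧ f ν ≤ f σ
    E = N \ {σ} ∧ (∀ i, relBetti N E i = if i = k then 1 else 0) := by
  intro I N E
  have hσred : σ ∈ reducedOf K f C := by
    rw [hred]; exact Finset.mem_singleton_self σ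
  have hσC : σ ∈ C := Finset.mem_of_mem_filter σ hσred
  have hσK : σ ∈ K := hC.1.1 hσC
  have hσne : σ.Nonempty := hK.1 σ hσK
  have hface : ∀ ν, ν ⊆ σ → ν.Nonempty → f ν ≤ f σ := fun ν h1 h2 =>
    face_le K hK f hf C hC σ hσred σ.card ν h1 h2 (by omega)
  have hNmem : ∀ ν, ν ∈ N ↔ ν ⊆ σ ∧ ν ≠ ∅ := by
    intro ν
    show ν ∈ closureOf I ↔ _
    unfold I
    rw [hred]
    simp [closureOf]
  have hσN : σ ∈ N := (hNmem σ).mpr ⟨subset_rfl, hσne.ne_empty⟩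
  have hE : E = N \ {σ} := by
    ext ν
    have hEmem : ν ∈ E ↔ ν ∈ N ∧ ν ∉ I ∧ f ν ≤ f σ := Finset.mem_filter
    rw [hEmem, Finset.mem_sdiff, Finset.mem_singleton]
    unfold I
    rw [hred, Finset.mem_singleton]
    constructor
    · rintro ⟨h1, h2, h3⟩; exact ⟨h1, h2⟩
    · rintro ⟨h1, h2⟩
      obtain ⟨hsub, hne⟩ := (hNmem ν).mp h1
      exact ⟨h1, h2, hface ν hsub (Finset.nonempty_iff_ne_empty.mpr hne)⟩
  refine ⟨hE, ?_⟩
  intro i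
  have hNE : N \ E = {σ} := by
    rw [hE, Finset.sdiff_sdiff_self_left,
      Finset.inter_eq_right.mpr (Finset.singleton_subset_iff.mpr hσN)]
  show bettiOf (N \ E) i = _
  rw [hNE]
  exact betti_singleton σ k i hk
end
end

section
/- Let f be a discrete Morse-Bott function on a finite abstract simplicial complex K, C a collection for f with common value v, and I = C^red its reduced collection. Let N be the closure of I and E = {σ ∈ N ∖ I : f(σ) ≤ v}. Then N ∖ E = C^red; equivalently, E = N ∖ C^red. -/
open Finset

noncomputable section
open scoped Classical

/-- Every cell of `K` belongs to some collection. -/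
lemma exists_collection (K : Finset (Finset ℕ)) (f : Finset ℕ → ℝ) {σ : Finset ℕ}
    (hσ : σ ∈ K) : ∃ C, IsCollection K f C ∧ σ ∈ C := by
  classical
  set S := K.powerset.filter (fun D => IsPreCollection K f D ∧ σ ∈ D) with hS
  have hmem : ({σ} : Finset (Finset ℕ)) ∈ S := by
    refine Finset.mem_filter.2 ⟨Finset.mem_powerset.2 (by simpa using hσ), ?_, by simp⟩
    refine ⟨by simpa using hσ, ⟨σ, Finset.mem_singleton_self σ⟩, ?_, ?_⟩
    · intro a ha b hb
      rw [Finset.mem_singleton.1 ha, Finset.mem_singleton.1 hb]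
    · intro a ha b hb
      rw [Finset.mem_singleton.1 ha, Finset.mem_singleton.1 hb]
  obtain ⟨D, hD, hDmax⟩ := S.exists_max_image Finset.card ⟨_, hmem⟩
  obtain ⟨-, hDpre, hσD⟩ := Finset.mem_filter.1 hD
  refine ⟨D, ⟨hDpre, ?_⟩, hσD⟩
  intro C' hC' hsub
  have hC'S : C' ∈ S :=
    Finset.mem_filter.2 ⟨Finset.mem_powerset.2 hC'.1, hC', hsub hσD⟩
  exact (Finset.eq_of_subset_of_card_le hsub (hDmax _ hC'S)).symm

/-- Key lemma: any nonempty subset of a cell of the reduced collection has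
`f`-value at most `v`. -/
lemma key_le (K : Finset (Finset ℕ)) (hK : IsComplex K) (f : Finset ℕ → ℝ)
    (hf : IsMorseBott K f) (C : Finset (Finset ℕ)) (hC : IsCollection K f C)
    (v : ℝ) (hv : ∀ τ ∈ C, f τ = v) :
    ∀ n σ τ, τ ∈ reducedOf K f C → σ ⊆ τ → σ.Nonempty → τ.card - σ.card = n →
      f σ ≤ v := by
  intro n
  induction n using Nat.strong_induction_on with
  | _ n ih =>
    intro σ τ hτ hsub hne hcard
    have hτC : τ ∈ C := (Finset.mem_filter.1 hτ).1
    have hτK : τ ∈ K := hC.1.1 hτC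
    have hσK : σ ∈ K := hK.2 τ hτK σ hsub hne
    have hcardle : σ.card ≤ τ.card := Finset.card_le_card hsub
    by_contra hgt
    push_neg at hgt
    have hσC : σ ∉ C := by
      intro h
      exact absurd (hv σ h) (by linarith)
    rcases Nat.lt_or_ge n 2 with hn2 | hn2
    · interval_cases n
      · have : σ = τ := Finset.eq_of_subset_of_card_le hsub (by omega)
        rw [this, hv τ hτC] at hgt
        exact lt_irrefl _ hgt
      · have hfacet : Facet σ τ := ⟨hsub, by omega⟩
        have : DownNoncrit K f C τ :=
          ⟨σ, hσK, hσC, hfacet, by rw [hv τ hτC]; exact hgt⟩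
        exact (Finset.mem_filter.1 hτ).2.2 this
    · -- n ≥ 2 : σ has at least two facets-cofaces inside τ with smaller f-value
      obtain ⟨D, hD, hσD⟩ := exists_collection K f hσK
      have hDval : ∀ w ∈ D, f w = f σ := fun w hw => hD.1.2.2.1 w hw σ hσD
      have hsubset : (τ \ σ).image (fun x => insert x σ) ⊆
          K.filter fun w => w ∉ D ∧ Facet σ w ∧ f w < f σ := by
        intro w hw
        obtain ⟨x, hx, rfl⟩ := Finset.mem_image.1 hw
        obtain ⟨hxτ, hxσ⟩ := Finset.mem_sdiff.1 hx
        have hins : insert x σ ⊆ τ := Finset.insert_subset hxτ hsub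
        have hcardins : (insert x σ).card = σ.card + 1 :=
          Finset.card_insert_of_notMem hxσ
        have hle : f (insert x σ) ≤ v := by
          refine ih (n - 1) (by omega) (insert x σ) τ hτ hins
            ⟨x, Finset.mem_insert_self x σ⟩ (by omega)
        have hlt : f (insert x σ) < f σ := lt_of_le_of_lt hle hgt
        refine Finset.mem_filter.2 ⟨hK.2 τ hτK _ hins
          ⟨x, Finset.mem_insert_self x σ⟩, ?_, ⟨Finset.subset_insert x σ, hcardins.symm⟩, hlt⟩
        intro h
        exact absurd (hDval _ h) (ne_of_lt hlt)
      have hinj : Set.InjOn (fun x => insert x σ) (τ \ σ : Finset ℕ) := by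
        intro x hx y hy hxy
        have hxσ : x ∉ σ := (Finset.mem_sdiff.1 hx).2
        have hyσ : y ∉ σ := (Finset.mem_sdiff.1 hy).2
        have : x ∈ insert y σ := by
          rw [← show insert x σ = insert y σ from hxy]
          exact Finset.mem_insert_self x σ
        rcases Finset.mem_insert.1 this with h | h
        · exact h
        · exact absurd h hxσ
      have hcard2 : 2 ≤ ((τ \ σ).image (fun x => insert x σ)).card := by
        rw [Finset.card_image_of_injOn hinj, Finset.card_sdiff_of_subset hsub]
        omega
      have hup : 2 ≤ UpCount K f D σ :=
        le_trans hcard2 (Finset.card_le_card hsubset)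
      have := (hf D hD σ hσD).1
      omega

lemma mem_closureOf {S : Finset (Finset ℕ)} {σ : Finset ℕ} :
    σ ∈ closureOf S ↔ ∃ τ ∈ S, σ ⊆ τ ∧ σ ≠ ∅ := by
  simp [closureOf, Finset.mem_biUnion, Finset.mem_filter, Finset.mem_powerset]

/-- For a collection `C` with common value `v`, `I = C^red`,
`N = closure(I)` and `E = {σ ∈ N ∖ I : f σ ≤ v}`, one has `N ∖ E = C^red`;
equivalently `E = N ∖ C^red`. -/
theorem statement14 (K : Finset (Finset ℕ)) (hK : IsComplex K) (f : Finset ℕ → ℝ)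
    (hf : IsMorseBott K f) (C : Finset (Finset ℕ)) (hC : IsCollection K f C)
    (v : ℝ) (hv : ∀ τ ∈ C, f τ = v) :
    let I := reducedOf K f C
    let N := closureOf I
    let E := N.filter fun σ => σ ∉ I ∧ f σ ≤ v
    N \ E = I ∧ E = N \ I := by
  intro I N E
  have hIsub : I ⊆ C := Finset.filter_subset _ _
  have hIN : I ⊆ N := by
    intro σ hσ
    exact mem_closureOf.2 ⟨σ, hσ, Finset.Subset.refl σ,
      Finset.nonempty_iff_ne_empty.1 (hK.1 σ (hC.1.1 (hIsub hσ)))⟩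
  have hle : ∀ σ ∈ N, f σ ≤ v := by
    intro σ hσ
    obtain ⟨τ, hτ, hsub, hne⟩ := mem_closureOf.1 hσ
    exact key_le K hK f hf C hC v hv _ σ τ hτ hsub
      (Finset.nonempty_iff_ne_empty.2 hne) rfl
  have hE : E = N \ I := by
    ext σ
    simp only [E, Finset.mem_filter, Finset.mem_sdiff]
    constructor
    · rintro ⟨h1, h2, -⟩; exact ⟨h1, h2⟩
    · rintro ⟨h1, h2⟩; exact ⟨h1, h2, hle σ h1⟩
  refine ⟨?_, hE⟩
  rw [hE, Finset.sdiff_sdiff_self_left]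
  exact Finset.inter_eq_right.2 hIN
end
end
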